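/- Any set-theoretical partial group action θ of G on a set X determines a partial representation π of G on the free K-module KX, defined by π_g(x) = θ_g(x) if x ∈ X_{g^{-1}} and π_g(x) = 0 otherwise. -/
import Mathlib


/-- The defining relations of Exel's semigroup `S(G)` of a group `G`:
`[1] = 1`, `[s⁻¹][s][t] = [s⁻¹][st]`, `[s][t][t⁻¹] = [st][t⁻¹]`. -/
inductive ExelRel (G : Type*) [Group G] : FreeMonoid G → FreeMonoid G → Prop
  | one : ExelRel G (FreeMonoid.of 1) 1
  | left (s t : G) : ExelRel G
      (FreeMonoid.of s⁻¹ * FreeMonoid.of s * FreeMonoid.of t)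
      (FreeMonoid.of s⁻¹ * FreeMonoid.of (s * t))
  | right (s t : G) : ExelRel G
      (FreeMonoid.of s * FreeMonoid.of t * FreeMonoid.of t⁻¹)
      (FreeMonoid.of (s * t) * FreeMonoid.of t⁻¹)

/-- The congruence on the free monoid on `G` generated by the Exel relations. -/
def ExelCon (G : Type*) [Group G] : Con (FreeMonoid G) := conGen (ExelRel G)

/-- Exel's semigroup (an inverse monoid) `S(G)` of the group `G`. -/
abbrev ExelMonoid (G : Type*) [Group G] := (ExelCon G).Quotient

/-- The canonical generator `[g]` of `S(G)`. -/
def ExelMonoid.of {G : Type*} [Group G] (g : G) : ExelMonoid G :=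
  (ExelCon G).mk' (FreeMonoid.of g)

/-- The idempotent `e_g := [g][g⁻¹]` in `S(G)`. -/
def ExelMonoid.e {G : Type*} [Group G] (g : G) : ExelMonoid G :=
  ExelMonoid.of g * ExelMonoid.of g⁻¹

/-- The partial group algebra `K_par G`: the semigroup `K`-algebra of Exel's semigroup. -/
abbrev KparG (K G : Type*) [CommRing K] [Group G] := MonoidAlgebra K (ExelMonoid G)

/-- The canonical generator `[g]` of `K_par G`. -/
noncomputable def pr (K : Type*) {G : Type*} [CommRing K] [Group G] (g : G) : KparG K G :=
  MonoidAlgebra.of K (ExelMonoid G) (ExelMonoid.of g)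

/-- The idempotent `e_g := [g][g⁻¹]` in `K_par G`. -/
noncomputable def eK (K : Type*) {G : Type*} [CommRing K] [Group G] (g : G) : KparG K G :=
  pr K g * pr K g⁻¹

open scoped Classical

/-- A partial representation of `G` in a monoid `A`. -/
def IsPartialRep {G A : Type*} [Group G] [Monoid A] (π : G → A) : Prop :=
  π 1 = 1 ∧ (∀ s t : G, π s * π t * π t⁻¹ = π (s * t) * π t⁻¹) ∧
    (∀ s t : G, π s⁻¹ * π s * π t = π s⁻¹ * π (s * t))

/-- Any set-theoretical partial action `θ = (G, X, {X_g}, {θ_g})` of `G` on a set `X`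
determines a partial representation `π` of `G` on the free `K`-module `KX`, with
`π_g(x) = θ_g(x)` for `x ∈ X_{g⁻¹}` and `π_g(x) = 0` otherwise. -/
theorem setPartialAction_induces_partialRep (K : Type*) {G X : Type*} [CommRing K]
    [Group G] (D : G → Set X) (θ : G → X → X)
    (hD1 : D 1 = Set.univ) (hθ1 : ∀ x : X, θ 1 x = x)
    (hmem : ∀ g : G, ∀ x ∈ D g⁻¹, θ g x ∈ D g)
    (hinv : ∀ g : G, ∀ x ∈ D g⁻¹, θ g⁻¹ (θ g x) = x)
    (hii : ∀ g h : G, ∀ x ∈ D g⁻¹ ∩ D (g⁻¹ * h), θ g x ∈ D g ∩ D h)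
    (hiii : ∀ g h : G, ∀ x ∈ D h⁻¹ ∩ D (h⁻¹ * g⁻¹), θ g (θ h x) = θ (g * h) x) :
    IsPartialRep (fun g : G =>
      (Finsupp.lsum K (fun x : X =>
        if x ∈ D g⁻¹ then Finsupp.lsingle (θ g x) else 0) :
          Module.End K (X →₀ K))) := by
  set π : G → Module.End K (X →₀ K) := fun g =>
    (Finsupp.lsum K (fun x : X =>
      if x ∈ D g⁻¹ then Finsupp.lsingle (θ g x) else 0)) with hπ
  have key : ∀ (g : G) (x : X) (k : K),
      π g (Finsupp.single x k)
        = if x ∈ D g⁻¹ then Finsupp.single (θ g x) k else 0 := by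
    intro g x k
    rw [hπ]
    simp only [Finsupp.lsum_apply, Finsupp.sum_single_index, LinearMap.zero_apply]
    by_cases h : x ∈ D g⁻¹ <;> simp [h, Finsupp.lsingle_apply]
  refine ⟨?_, ?_, ?_⟩
  · apply Finsupp.lhom_ext
    intro a b
    rw [key]
    simp [hθ1, hD1]
  · intro s t
    apply Finsupp.lhom_ext
    intro a b
    simp only [Module.End.mul_apply]
    rw [key]
    simp only [inv_inv]
    by_cases hat : a ∈ D t
    · rw [if_pos hat]
      set y := θ t⁻¹ a with hy
      have hyd : y ∈ D t⁻¹ := by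
        have := hmem t⁻¹ a (by simpa using hat); simpa using this
      have hty : θ t y = a := by
        have := hinv t⁻¹ a (by simpa using hat); simpa using this
      rw [key, key, if_pos (by simpa using hyd), hty, key]
      have hcond : a ∈ D s⁻¹ ↔ y ∈ D (s * t)⁻¹ := by
        constructor
        · intro has
          have := hii t⁻¹ (t⁻¹ * s⁻¹) a
            (by simp only [inv_inv, mul_inv_cancel_left]; exact ⟨hat, has⟩)
          simpa [mul_inv_rev] using this.2
        · intro hys
          have := hii t s⁻¹ y ⟨hyd, by simpa [mul_inv_rev] using hys⟩
          exact hty ▸ this.2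
      by_cases has : a ∈ D s⁻¹
      · rw [if_pos has, if_pos (hcond.mp has)]
        have : θ s (θ t y) = θ (s * t) y :=
          hiii s t y ⟨hyd, by simpa [mul_inv_rev] using hcond.mp has⟩
        rw [hty] at this
        rw [this]
      · rw [if_neg has, if_neg (fun h => has (hcond.mpr h))]
    · rw [if_neg hat]
      simp
  · intro s t
    apply Finsupp.lhom_ext
    intro a b
    simp only [Module.End.mul_apply]
    rw [key t a b, key (s * t) a b]
    by_cases hat : a ∈ D t⁻¹
    · rw [if_pos hat]
      set z := θ t a with hz
      have hzd : z ∈ D t := hmem t a hat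
      have htz : θ t⁻¹ z = a := hinv t a hat
      have hcond : z ∈ D s⁻¹ ↔ a ∈ D (s * t)⁻¹ := by
        constructor
        · intro hzs
          have := hii t⁻¹ (t⁻¹ * s⁻¹) z
            (by simp only [inv_inv, mul_inv_cancel_left]; exact ⟨hzd, hzs⟩)
          rw [htz] at this
          simpa [mul_inv_rev] using this.2
        · intro has
          have := hii t s⁻¹ a ⟨hat, by simpa [mul_inv_rev] using has⟩
          exact this.2
      rw [key s z b]
      by_cases hzs : z ∈ D s⁻¹
      · rw [if_pos hzs, if_pos (hcond.mp hzs), key, key,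
          if_pos (by simpa using hmem s z hzs)]
        have hw : θ (s * t) a = θ s z := (hiii s t a ⟨hat,
          by simpa [mul_inv_rev] using hcond.mp hzs⟩).symm
        rw [hw, if_pos (by simpa using hmem s z hzs)]
      · rw [if_neg hzs, if_neg (fun h => hzs (hcond.mpr h))]
    · rw [if_neg hat]
      by_cases has : a ∈ D (s * t)⁻¹
      · rw [if_pos has, key s⁻¹ (θ (s * t) a) b]
        have hns : θ (s * t) a ∉ D s⁻¹⁻¹ := by
          simp only [inv_inv]
          intro hw
          have h2 := hii (s * t)⁻¹ t⁻¹ (θ (s * t) a)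
            (by simp only [inv_inv, mul_inv_cancel_right]
                exact ⟨hmem (s * t) a has, hw⟩)
          rw [hinv (s * t) a has] at h2
          exact hat h2.2
        rw [if_neg hns]
        simp
      · rw [if_neg has]
        simp
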